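/- For real x with 0 < 4x < 1 and natural number k ≥ 1, the generating function identity ((1-√(1-4x))/(2x))^k = ∑_{n=0}^∞ k·(2n+k-1)!/(n!·(n+k)!) · x^n holds. -/

import Mathlib

open Finset

noncomputable def aa (k n : ℕ) : ℝ :=
  (k * Nat.factorial (2 * n + k - 1) : ℝ) / (Nat.factorial n * Nat.factorial (n + k))

lemma aa_eq (j n : ℕ) :
    aa (j + 1) n = ((j : ℝ) + 1) * Nat.factorial (2 * n + j)
      / (Nat.factorial n * Nat.factorial (n + j + 1)) := by
  have h1 : 2 * n + (j + 1) - 1 = 2 * n + j := by omega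
  have h2 : n + (j + 1) = n + j + 1 := by omega
  rw [aa, h1, h2]
  push_cast
  ring

lemma aa_pos (j n : ℕ) : 0 < aa (j + 1) n := by
  rw [aa_eq]; positivity

lemma aa_zero (j : ℕ) : aa (j + 1) 0 = 1 := by
  rw [aa_eq]
  have h2 : (0:ℕ) + j + 1 = j + 1 := by omega
  have h3 : (2*0) + j = j := by omega
  rw [h2, h3, Nat.factorial_succ, Nat.factorial_zero]
  have : (0:ℝ) < Nat.factorial j := by positivity
  push_cast
  field_simp

lemma catalan_cast (n : ℕ) :
    (catalan n : ℝ) = Nat.factorial (2 * n) / (Nat.factorial n * Nat.factorial (n + 1)) := by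
  have h1 : (n + 1) * catalan n = n.centralBinom := succ_mul_catalan_eq_centralBinom n
  have h2 : n.centralBinom * Nat.factorial n * Nat.factorial n = Nat.factorial (2 * n) := by
    have := Nat.choose_mul_factorial_mul_factorial (show n ≤ 2 * n by omega)
    simpa [Nat.centralBinom, show 2 * n - n = n by omega] using this
  rw [eq_div_iff (by positivity)]
  have : ((2*n).factorial : ℝ) = n.centralBinom * Nat.factorial n * Nat.factorial n := by
    exact_mod_cast h2.symm
  rw [this, Nat.factorial_succ]
  have hc : ((n:ℝ) + 1) * catalan n = n.centralBinom := by exact_mod_cast h1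
  push_cast
  rw [← hc]
  ring

lemma aa_one (n : ℕ) : aa 1 n = catalan n := by
  rw [show (1:ℕ) = 0 + 1 from rfl, aa_eq, catalan_cast]
  norm_num

lemma aa_two (n : ℕ) : aa 2 (n) = catalan (n + 1) := by
  rw [show (2:ℕ) = 1 + 1 from rfl, aa_eq, catalan_cast]
  have f1 : ((2*(n+1)).factorial : ℝ) = (2*n+2) * Nat.factorial (2*n+1) := by
    rw [show 2*(n+1) = (2*n+1)+1 by omega, Nat.factorial_succ]; push_cast; ring
  have f2 : ((n+1).factorial : ℝ) = (n+1) * Nat.factorial n := by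
    rw [Nat.factorial_succ]; push_cast; ring
  rw [f1, f2, show n+1+1 = n+2 by omega]
  have h1 : (0:ℝ) < Nat.factorial n := by positivity
  have h2 : (0:ℝ) < Nat.factorial (n+2) := by positivity
  have h3 : (0:ℝ) < Nat.factorial (2*n+1) := by positivity
  field_simp
  ring

lemma aa_three (j n : ℕ) :
    aa (j + 2) (n + 1) = aa (j + 1) (n + 1) + aa (j + 3) n := by
  have e1 : aa (j+2) (n+1) = ((j:ℝ) + 2) * Nat.factorial (2*n + j + 3)
      / (Nat.factorial (n+1) * Nat.factorial (n + j + 3)) := by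
    rw [show j + 2 = (j+1)+1 by ring, aa_eq, show 2*(n+1)+(j+1) = 2*n+j+3 by omega,
      show n+1+(j+1)+1 = n+j+3 by omega]
    push_cast; ring
  have e2 : aa (j+1) (n+1) = ((j:ℝ) + 1) * Nat.factorial (2*n + j + 2)
      / (Nat.factorial (n+1) * Nat.factorial (n + j + 2)) := by
    rw [aa_eq, show 2*(n+1)+j = 2*n+j+2 by omega, show n+1+j+1 = n+j+2 by omega]
  have e3 : aa (j+3) n = ((j:ℝ) + 3) * Nat.factorial (2*n + j + 2)
      / (Nat.factorial n * Nat.factorial (n + j + 3)) := by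
    rw [show j + 3 = (j+2)+1 by ring, aa_eq, show 2*n+(j+2) = 2*n+j+2 by omega,
      show n+(j+2)+1 = n+j+3 by omega]
    push_cast; ring
  rw [e1, e2, e3]
  have f1 : (Nat.factorial (2*n+j+3) : ℝ) = (2*n+j+3) * Nat.factorial (2*n+j+2) := by
    rw [show 2*n+j+3 = (2*n+j+2)+1 by ring, Nat.factorial_succ]; push_cast; ring
  have f2 : (Nat.factorial (n+j+3) : ℝ) = (n+j+3) * Nat.factorial (n+j+2) := by
    rw [show n+j+3 = (n+j+2)+1 by ring, Nat.factorial_succ]; push_cast; ring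
  have f3 : (Nat.factorial (n+1) : ℝ) = (n+1) * Nat.factorial n := by
    rw [Nat.factorial_succ]; push_cast; ring
  rw [f1, f2, f3]
  have h1 : (0:ℝ) < Nat.factorial n := by positivity
  have h2 : (0:ℝ) < Nat.factorial (n+j+2) := by positivity
  have h3 : (0:ℝ) < Nat.factorial (2*n+j+2) := by positivity
  field_simp
  ring

lemma aa_conv : ∀ n k : ℕ,
    ∑ i ∈ range (n + 1), (catalan i : ℝ) * aa (k + 1) (n - i) = aa (k + 2) n := by
  intro n
  induction n with
  | zero =>
    intro k
    simp [aa_zero, show k + 2 = (k+1)+1 from rfl]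
  | succ n ih =>
    intro k
    induction k with
    | zero =>
      have hcat : catalan (n + 2) = ∑ i ∈ range (n + 2), catalan i * catalan (n + 1 - i) := by
        rw [catalan_succ (n + 1)]
        exact (Finset.sum_range fun i => catalan i * catalan (n + 1 - i)).symm
      show ∑ i ∈ range (n + 2), (catalan i : ℝ) * aa 1 (n + 1 - i) = aa 2 (n + 1)
      simp_rw [aa_one]
      rw [aa_two, show n+1+1 = n+2 from rfl, hcat]
      push_cast
      rfl
    | succ k ihk =>
      rw [Finset.sum_range_succ]
      have step : ∀ i ∈ range (n + 1),
          (catalan i : ℝ) * aa (k + 2) (n + 1 - i)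
            = (catalan i : ℝ) * aa (k + 1) (n + 1 - i) + (catalan i : ℝ) * aa (k + 3) (n - i) := by
        intro i hi
        have hin : i ≤ n := by simpa using Nat.lt_succ_iff.mp (Finset.mem_range.mp hi)
        have h1 : n + 1 - i = (n - i) + 1 := by omega
        rw [h1, aa_three, mul_add]
      rw [Finset.sum_congr rfl step, Finset.sum_add_distrib]
      have houter := ih (k + 2)
      have hinner : ∑ i ∈ range (n + 1), (catalan i : ℝ) * aa (k + 1) (n + 1 - i)
            + (catalan (n+1) : ℝ) * aa (k + 1) (n + 1 - (n+1))
          = aa (k + 2) (n + 1) := by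
        rw [← Finset.sum_range_succ (fun i => (catalan i : ℝ) * aa (k + 1) (n + 1 - i)) (n+1)]
        exact ihk
      have h3 := aa_three (k + 1) n
      rw [show k+1+2 = k+3 from rfl, show k+1+1 = k+2 from rfl, show k+1+3 = k+4 from rfl] at h3
      rw [show k+2+2 = k+4 from rfl] at houter
      calc ∑ i ∈ range (n + 1), (catalan i : ℝ) * aa (k + 1) (n + 1 - i)
            + ∑ i ∈ range (n + 1), (catalan i : ℝ) * aa (k + 3) (n - i)
            + (catalan (n+1) : ℝ) * aa (k + 2) (n + 1 - (n+1))
          = (∑ i ∈ range (n + 1), (catalan i : ℝ) * aa (k + 1) (n + 1 - i)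
            + (catalan (n+1) : ℝ) * aa (k + 1) (n + 1 - (n+1)))
            + ∑ i ∈ range (n + 1), (catalan i : ℝ) * aa (k + 2 + 1) (n - i) := by
            rw [Nat.sub_self,
              show aa (k+2) 0 = aa (k+1) 0 from by
                rw [show k+2 = (k+1)+1 from rfl, aa_zero, aa_zero],
              show k+2+1 = k+3 from rfl]
            ring
        _ = aa (k + 2) (n + 1) + aa (k + 4) n := by rw [hinner, houter]
        _ = aa (k + 3) (n + 1) := h3.symm

lemma aa_le (j n : ℕ) : aa (j + 1) n ≤ 2 ^ (j + 1) * 4 ^ n := by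
  have h1 : (j + 1) * Nat.factorial (2*n+j) ≤ Nat.factorial (2*n+j+1) := by
    rw [Nat.factorial_succ]
    exact Nat.mul_le_mul_right _ (by omega)
  have h2 : Nat.factorial (2*n+j+1)
      = (2*n+j+1).choose n * Nat.factorial n * Nat.factorial (n+j+1) := by
    have h := Nat.choose_mul_factorial_mul_factorial (show n ≤ 2*n+j+1 by omega)
    rw [show 2*n+j+1-n = n+j+1 by omega] at h
    exact h.symm
  have h3 : (2*n+j+1).choose n ≤ 2 ^ (2*n+j+1) := by
    calc (2*n+j+1).choose n ≤ ∑ i ∈ range (2*n+j+1+1), (2*n+j+1).choose i :=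
          Finset.single_le_sum (fun i _ => Nat.zero_le _) (Finset.mem_range.mpr (by omega))
      _ = 2 ^ (2*n+j+1) := Nat.sum_range_choose _
  have key : (j + 1) * Nat.factorial (2*n+j)
      ≤ 2 ^ (2*n+j+1) * (Nat.factorial n * Nat.factorial (n+j+1)) := by
    calc (j + 1) * Nat.factorial (2*n+j) ≤ Nat.factorial (2*n+j+1) := h1
      _ = (2*n+j+1).choose n * (Nat.factorial n * Nat.factorial (n+j+1)) := by
          rw [h2]; ring
      _ ≤ 2 ^ (2*n+j+1) * (Nat.factorial n * Nat.factorial (n+j+1)) :=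
          Nat.mul_le_mul_right _ h3
  rw [aa_eq, div_le_iff₀ (by positivity)]
  have keyR : ((j : ℝ) + 1) * Nat.factorial (2*n+j)
      ≤ 2 ^ (2*n+j+1) * (Nat.factorial n * Nat.factorial (n+j+1)) := by
    exact_mod_cast key
  calc ((j : ℝ) + 1) * Nat.factorial (2*n+j)
      ≤ 2 ^ (2*n+j+1) * (Nat.factorial n * Nat.factorial (n+j+1)) := keyR
    _ = 2 ^ (j+1) * 4 ^ n * (Nat.factorial n * Nat.factorial (n+j+1)) := by
        rw [show 2*n+j+1 = (j+1) + 2*n by omega, pow_add, pow_mul]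
        norm_num

lemma aa_summable (j : ℕ) {t : ℝ} (h0 : 0 ≤ t) (h1 : 4 * t < 1) :
    Summable (fun n => aa (j + 1) n * t ^ n) := by
  have hg : Summable (fun n : ℕ => (2:ℝ) ^ (j+1) * (4*t) ^ n) :=
    (summable_geometric_of_lt_one (by positivity) h1).mul_left _
  refine Summable.of_nonneg_of_le (fun n => ?_) (fun n => ?_) hg
  · exact mul_nonneg (aa_pos j n).le (by positivity)
  · calc aa (j+1) n * t ^ n ≤ 2 ^ (j+1) * 4 ^ n * t ^ n :=
        mul_le_mul_of_nonneg_right (aa_le j n) (by positivity)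
      _ = 2 ^ (j+1) * (4*t) ^ n := by rw [mul_pow]; ring

lemma catalan_summable {t : ℝ} (h0 : 0 ≤ t) (h1 : 4 * t < 1) :
    Summable (fun n => (catalan n : ℝ) * t ^ n) := by
  have := aa_summable 0 h0 h1
  simpa [aa_one] using this

set_option maxHeartbeats 2000000 in
lemma catalan_quadratic {t : ℝ} (h0 : 0 ≤ t) (h1 : 4 * t < 1) :
    (∑' n : ℕ, (catalan n : ℝ) * t ^ n) = 1 + t * (∑' n : ℕ, (catalan n : ℝ) * t ^ n) ^ 2 := by
  set g := ∑' n : ℕ, (catalan n : ℝ) * t ^ n with hg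
  have hsum := catalan_summable h0 h1
  have hnorm : Summable (fun n => ‖(catalan n : ℝ) * t ^ n‖) := by
    refine hsum.congr fun n => ?_
    rw [Real.norm_eq_abs, abs_of_nonneg (by positivity)]
  have hcp : g * g = ∑' n : ℕ, ∑ i ∈ range (n+1),
      ((catalan i : ℝ) * t ^ i) * ((catalan (n - i) : ℝ) * t ^ (n - i)) :=
    tsum_mul_tsum_eq_tsum_sum_range_of_summable_norm hnorm hnorm
  have hinner : ∀ n : ℕ, ∑ i ∈ range (n+1),
      ((catalan i : ℝ) * t ^ i) * ((catalan (n - i) : ℝ) * t ^ (n - i))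
      = (catalan (n+1) : ℝ) * t ^ n := by
    intro n
    have e1 : ∀ i ∈ range (n+1),
        ((catalan i : ℝ) * t ^ i) * ((catalan (n - i) : ℝ) * t ^ (n - i))
        = ((catalan i : ℝ) * (catalan (n - i) : ℝ)) * t ^ n := by
      intro i hi
      have hin : i ≤ n := Nat.lt_succ_iff.mp (Finset.mem_range.mp hi)
      have : t ^ i * t ^ (n - i) = t ^ n := by
        rw [← pow_add, show i + (n - i) = n by omega]
      calc ((catalan i : ℝ) * t ^ i) * ((catalan (n - i) : ℝ) * t ^ (n - i))
          = ((catalan i : ℝ) * (catalan (n - i) : ℝ)) * (t ^ i * t ^ (n - i)) := by ring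
        _ = ((catalan i : ℝ) * (catalan (n - i) : ℝ)) * t ^ n := by rw [this]
    rw [Finset.sum_congr rfl e1, ← Finset.sum_mul]
    congr 1
    have hcat : catalan (n + 1) = ∑ i ∈ range (n + 1), catalan i * catalan (n - i) := by
      rw [catalan_succ n]
      exact (Finset.sum_range fun i => catalan i * catalan (n - i)).symm
    rw [hcat]
    push_cast
    rfl
  have hshift : Summable (fun n : ℕ => (catalan (n+1) : ℝ) * t ^ (n+1)) := by
    exact (summable_nat_add_iff 1).mpr hsum
  have hzero : g = 1 + ∑' n : ℕ, (catalan (n+1) : ℝ) * t ^ (n+1) := by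
    rw [hg, hsum.tsum_eq_zero_add]
    norm_num
  have : t * g ^ 2 = ∑' n : ℕ, (catalan (n+1) : ℝ) * t ^ (n+1) := by
    rw [sq, hcp]
    simp_rw [hinner]
    rw [← tsum_mul_left]
    congr 1
    funext n
    ring
  rw [this, hzero]

lemma catalan_le (n : ℕ) : (catalan n : ℝ) ≤ 2 * 4 ^ n := by
  have := aa_le 0 n
  rw [aa_one] at this
  simpa using this

lemma catalan_gf_base (x : ℝ) (hx : 0 < 4 * x) (hx' : 4 * x < 1) :
    (1 - Real.sqrt (1 - 4 * x)) / (2 * x) = ∑' n : ℕ, (catalan n : ℝ) * x ^ n := by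
  have hx0 : 0 < x := by linarith
  set c : ℝ → ℝ := fun t => min (max t 0) x with hc
  have hc_cont : Continuous c := (continuous_id.max continuous_const).min continuous_const
  have hc0 : ∀ t, 0 ≤ c t := fun t => le_min (le_max_right t 0) hx0.le
  have hcx : ∀ t, c t ≤ x := fun t => min_le_right _ _
  set f : ℝ → ℝ := fun t => ∑' n : ℕ, (catalan n : ℝ) * (c t) ^ n with hf
  have hf_cont : Continuous f := by
    refine continuous_tsum (fun n => continuous_const.mul (hc_cont.pow n))
      (((summable_geometric_of_lt_one (by positivity) hx').mul_left 2)) (fun n t => ?_)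
    rw [Real.norm_eq_abs, abs_of_nonneg (by positivity)]
    calc (catalan n : ℝ) * (c t) ^ n ≤ (2 * 4 ^ n) * x ^ n := by
          refine mul_le_mul (catalan_le n) (pow_le_pow_left₀ (hc0 t) (hcx t) n)
            (by positivity) (by positivity)
      _ = 2 * (4 * x) ^ n := by rw [mul_pow]; ring
  have hct : ∀ t, 0 ≤ t → t ≤ x → c t = t := by
    intro t ht0 htx
    rw [hc]
    simp [max_eq_left ht0, min_eq_left htx]
  have key : ∀ t ∈ Set.Icc (0:ℝ) x, (2 * t * f t - 1) ^ 2 = 1 - 4 * t := by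
    rintro t ⟨ht0, htx⟩
    have h4t : 4 * t < 1 := by linarith
    have hq := catalan_quadratic ht0 h4t
    have hft : f t = ∑' n : ℕ, (catalan n : ℝ) * t ^ n := by
      rw [hf]
      simp only [hct t ht0 htx]
    rw [hft]
    set g := ∑' n : ℕ, (catalan n : ℝ) * t ^ n
    linear_combination (-4*t) * hq
  have hH_cont : Continuous (fun t => 2 * t * f t - 1) := by
    exact ((continuous_const.mul continuous_id).mul hf_cont).sub continuous_const
  have hne : ∀ t ∈ Set.Icc (0:ℝ) x, 2 * t * f t - 1 ≠ 0 := by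
    intro t ht h0
    have := key t ht
    rw [h0] at this
    have : (4:ℝ) * t < 1 := by linarith [ht.2]
    nlinarith [key t ht, h0]
  have hneg : 2 * x * f x - 1 < 0 := by
    by_contra hpos
    push_neg at hpos
    have h00 : 2 * 0 * f 0 - 1 = -1 := by ring
    have hmem : (0:ℝ) ∈ Set.Icc (2 * 0 * f 0 - 1) (2 * x * f x - 1) := by
      constructor
      · rw [h00]; norm_num
      · exact hpos
    have := intermediate_value_Icc hx0.le (hH_cont.continuousOn
      (s := Set.Icc (0:ℝ) x)) hmem
    obtain ⟨t, htmem, ht⟩ := this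
    exact hne t htmem ht
  have hsq : (2 * x * f x - 1) ^ 2 = 1 - 4 * x :=
    key x ⟨hx0.le, le_refl x⟩
  have hsqrt : Real.sqrt (1 - 4 * x) = -(2 * x * f x - 1) := by
    rw [← hsq, Real.sqrt_sq_eq_abs, abs_of_neg hneg]
  have hfx : f x = ∑' n : ℕ, (catalan n : ℝ) * x ^ n := by
    rw [hf]
    simp only [hct x hx0.le (le_refl x)]
  rw [hsqrt, ← hfx]
  field_simp
  ring

lemma catalan_gf_pow (x : ℝ) (hx : 0 < 4 * x) (hx' : 4 * x < 1) :
    ∀ j : ℕ, ((1 - Real.sqrt (1 - 4 * x)) / (2 * x)) ^ (j + 1)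
      = ∑' n : ℕ, aa (j + 1) n * x ^ n := by
  have hx0 : 0 < x := by linarith
  have hbase : (1 - Real.sqrt (1 - 4 * x)) / (2 * x) = ∑' n : ℕ, aa 1 n * x ^ n := by
    rw [catalan_gf_base x hx hx']
    exact tsum_congr fun n => by rw [aa_one]
  intro j
  induction j with
  | zero => simpa using hbase
  | succ j ih =>
    have hnorm : ∀ m : ℕ, Summable (fun n => ‖aa (m + 1) n * x ^ n‖) := by
      intro m
      refine (aa_summable m hx0.le hx').congr fun n => ?_
      rw [Real.norm_eq_abs, abs_of_nonneg (mul_nonneg (aa_pos m n).le (by positivity))]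
    have hnorm1 : Summable (fun n => ‖aa 1 n * x ^ n‖) := hnorm 0
    calc ((1 - Real.sqrt (1 - 4 * x)) / (2 * x)) ^ (j + 1 + 1)
        = ((1 - Real.sqrt (1 - 4 * x)) / (2 * x))
          * ((1 - Real.sqrt (1 - 4 * x)) / (2 * x)) ^ (j + 1) := by rw [pow_succ']
      _ = (∑' n : ℕ, aa 1 n * x ^ n) * ∑' n : ℕ, aa (j + 1) n * x ^ n := by rw [ih, hbase]
      _ = ∑' n : ℕ, ∑ i ∈ range (n + 1), (aa 1 i * x ^ i) * (aa (j + 1) (n - i) * x ^ (n - i)) :=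
          tsum_mul_tsum_eq_tsum_sum_range_of_summable_norm hnorm1 (hnorm j)
      _ = ∑' n : ℕ, aa (j + 2) n * x ^ n := by
          refine tsum_congr fun n => ?_
          have e1 : ∀ i ∈ range (n + 1),
              (aa 1 i * x ^ i) * (aa (j + 1) (n - i) * x ^ (n - i))
              = ((catalan i : ℝ) * aa (j + 1) (n - i)) * x ^ n := by
            intro i hi
            have hin : i ≤ n := Nat.lt_succ_iff.mp (Finset.mem_range.mp hi)
            have hp : x ^ i * x ^ (n - i) = x ^ n := by
              rw [← pow_add, show i + (n - i) = n by omega]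
            rw [aa_one]
            calc ((catalan i : ℝ) * x ^ i) * (aa (j + 1) (n - i) * x ^ (n - i))
                = ((catalan i : ℝ) * aa (j + 1) (n - i)) * (x ^ i * x ^ (n - i)) := by ring
              _ = ((catalan i : ℝ) * aa (j + 1) (n - i)) * x ^ n := by rw [hp]
          rw [Finset.sum_congr rfl e1, ← Finset.sum_mul, aa_conv n j]

theorem catalan_gf_power (x : ℝ) (hx : 0 < 4 * x) (hx' : 4 * x < 1) (k : ℕ) (hk : 1 ≤ k) :
    ((1 - Real.sqrt (1 - 4 * x)) / (2 * x)) ^ k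
      = ∑' n : ℕ, (k * Nat.factorial (2 * n + k - 1) : ℝ)
          / (Nat.factorial n * Nat.factorial (n + k)) * x ^ n := by
  obtain ⟨j, rfl⟩ : ∃ j, k = j + 1 := ⟨k - 1, by omega⟩
  have := catalan_gf_pow x hx hx' j
  simpa only [aa] using this
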